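/- For any substring u of the n-th Thue–Morse word t_n with u ∉ {aba, bab, ab, ba, a, b}, all occurrences of u in t_n start at positions of the same parity. -/

import Mathlib

/-- `u` occurs in `w` starting at 1-indexed position `i`. -/
def occursAt {α : Type*} (w u : List α) (i : ℕ) : Prop :=
  1 ≤ i ∧ i + u.length ≤ w.length + 1 ∧ (w.drop (i - 1)).take u.length = u

/-- `u` is a right extension in `w`: `u = x ++ [c]`, both `x++[c]` and `x++[c']`
occur in `w` for some `c' ≠ c`. -/
def RightExt {α : Type*} (w u : List α) : Prop :=
  ∃ (x : List α) (c c' : α), c ≠ c' ∧ u = x ++ [c] ∧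
    (x ++ [c]) <:+: w ∧ (x ++ [c']) <:+: w

/-- super-maximal right extension: not a proper suffix of another right extension. -/
def SupMaxExt {α : Type*} (w u : List α) : Prop :=
  RightExt w u ∧ ∀ v, RightExt w v → u <:+ v → u = v

def SRE {α : Type*} (w : List α) : Set (List α) := {u | SupMaxExt w u}

noncomputable def chi {α : Type*} (w : List α) : ℕ := (SRE w).ncard

/-- `w` ends with a character that occurs nowhere else. -/
def UniqueTerm {α : Type*} (w : List α) : Prop :=
  ∃ (v : List α) (d : α), w = v ++ [d] ∧ d ∉ v

/-- substring equation system -/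
structure SES (α : Type*) where
  n : ℕ
  Eqs : Finset (ℕ × ℕ × ℕ)
  Ch : Finset (ℕ × α)

def SES.valid {α : Type*} (E : SES α) : Prop :=
  (∀ e ∈ E.Eqs, 1 ≤ e.1 ∧ 1 ≤ e.2.1 ∧ 1 ≤ e.2.2 ∧
      e.1 + e.2.2 ≤ E.n + 1 ∧ e.2.1 + e.2.2 ≤ E.n + 1) ∧
  (∀ kc ∈ E.Ch, 1 ≤ kc.1 ∧ kc.1 ≤ E.n)

def SES.sat {α : Type*} (E : SES α) (w : List α) : Prop :=
  w.length = E.n ∧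
  (∀ e ∈ E.Eqs, (w.drop (e.1 - 1)).take e.2.2 = (w.drop (e.2.1 - 1)).take e.2.2) ∧
  (∀ kc ∈ E.Ch, w[kc.1 - 1]? = some kc.2)

def SES.represents {α : Type*} (E : SES α) (w : List α) : Prop :=
  E.sat w ∧ ∀ w' : List α, E.sat w' → w' = w

def SES.size {α : Type*} (E : SES α) : ℕ := E.Eqs.card + E.Ch.card

/-- minimum size of a valid SES representing `w` -/
noncomputable def sVal {α : Type*} (w : List α) : ℕ :=
  sInf {k | ∃ E : SES α, E.valid ∧ E.represents w ∧ E.size = k}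

/-- bidirectional macro scheme machinery -/
def phraseLen {α : Type*} : α ⊕ (ℕ × ℕ) → ℕ
  | Sum.inl _ => 1
  | Sum.inr (_, ℓ) => ℓ

def startPos {α : Type*} (ph : List (α ⊕ (ℕ × ℕ))) (t : ℕ) : ℕ :=
  1 + ((ph.take t).map phraseLen).sum

/-- the phrase list `ph` is a (content-correct) macro scheme for `w` -/
def BMSFor {α : Type*} (w : List α) (ph : List (α ⊕ (ℕ × ℕ))) : Prop :=
  (ph.map phraseLen).sum = w.length ∧
  ∀ t (h : t < ph.length),
    match ph.get ⟨t, h⟩ with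
    | Sum.inl c => w[startPos ph t - 1]? = some c
    | Sum.inr (p, ℓ) => 1 ≤ ℓ ∧ 1 ≤ p ∧ p + ℓ ≤ w.length + 1 ∧
        (w.drop (startPos ph t - 1)).take ℓ = (w.drop (p - 1)).take ℓ

/-- the transition function τ (on 0-based offsets) -/
def tauAux {α : Type*} : List (α ⊕ (ℕ × ℕ)) → ℕ → Option ℕ
  | [], _ => none
  | (Sum.inl _) :: rest, i => if i = 0 then none else tauAux rest (i - 1)
  | (Sum.inr (p, ℓ)) :: rest, i => if i < ℓ then some (p + i) else tauAux rest (i - ℓ)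

/-- τ on 1-indexed positions -/
def tauStep {α : Type*} (ph : List (α ⊕ (ℕ × ℕ))) (i : ℕ) : Option ℕ :=
  tauAux ph (i - 1)

/-- validity: every position reaches ⊥ after finitely many steps -/
def BMSValid {α : Type*} (ph : List (α ⊕ (ℕ × ℕ))) (n : ℕ) : Prop :=
  ∀ i, 1 ≤ i → i ≤ n →
    ∃ k, (fun o : Option ℕ => o.bind (tauStep ph))^[k] (some i) = none

noncomputable def bVal {α : Type*} (w : List α) : ℕ :=
  sInf {k | ∃ ph : List (α ⊕ (ℕ × ℕ)),
      BMSFor w ph ∧ BMSValid ph w.length ∧ ph.length = k}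

/-- string attractor -/
def IsAttractor {α : Type*} (w : List α) (Γ : Finset ℕ) : Prop :=
  (∀ p ∈ Γ, 1 ≤ p ∧ p ≤ w.length) ∧
  ∀ u : List α, u ≠ [] → u <:+: w →
    ∃ i, occursAt w u i ∧ ∃ p ∈ Γ, i ≤ p ∧ p ≤ i + u.length - 1

noncomputable def gammaVal {α : Type*} (w : List α) : ℕ :=
  sInf {k | ∃ Γ : Finset ℕ, IsAttractor w Γ ∧ Γ.card = k}

/-- Thue–Morse words over Bool (`false` = a, `true` = b) -/
def tm : ℕ → List Bool
  | 0 => [false]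
  | n + 1 => (tm n).flatMap (fun b => [b, !b])

/-- leftmost occurrence -/
def leftmostOcc {α : Type*} (w v : List α) (i : ℕ) : Prop :=
  occursAt w v i ∧ ∀ i', occursAt w v i' → i ≤ i'

/-- generating pairs of the equivalence `≡_χ` -/
def GenPair {α : Type*} (w : List α) (j j' : ℕ) : Prop :=
  ∃ (y z x : List α) (c c' : α) (i i' : ℕ),
    x ≠ [] ∧
    SupMaxExt w (y ++ x ++ [c]) ∧ SupMaxExt w (z ++ x ++ [c']) ∧
    (y = [] ∨ z = [] ∨ y.getLast? ≠ z.getLast?) ∧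
    leftmostOcc w (y ++ x ++ [c]) i ∧ leftmostOcc w (z ++ x ++ [c']) i' ∧
    ∃ k < x.length, j = i + y.length + k ∧ j' = i' + z.length + k

def chiEquiv {α : Type*} (w : List α) : ℕ → ℕ → Prop := Relation.EqvGen (GenPair w)

section TMAux

lemma fm_get (l : List Bool) (k : ℕ) :
    (l.flatMap (fun b => [b, !b]))[2*k]? = l[k]? ∧
    (l.flatMap (fun b => [b, !b]))[2*k+1]? = (l[k]?).map (fun b => !b) := by
  induction l generalizing k with
  | nil => simp
  | cons a l ih =>
    cases k with
    | zero => simp [List.flatMap_cons]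
    | succ k =>
      have h := ih k
      have e1 : 2 * (k+1) = (2*k) + 1 + 1 := by ring
      have e2 : 2 * (k+1) + 1 = (2*k+1) + 1 + 1 := by ring
      simp only [List.flatMap_cons, List.cons_append, List.singleton_append, e1, e2,
        List.getElem?_cons_succ, List.nil_append, h.1, h.2]
      try exact ⟨trivial, trivial⟩

lemma tm_pair (n k : ℕ) (b : Bool) (h1 : (tm n)[2*k]? = some b)
    (h2 : (tm n)[2*k+1]? = some b) : False := by
  cases n with
  | zero =>
    obtain ⟨h, -⟩ := List.getElem?_eq_some_iff.mp h2
    simp [tm] at h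
  | succ n =>
    have hf1 := (fm_get (tm n) k).1
    have hf2 := (fm_get (tm n) k).2
    rw [show tm (n+1) = (tm n).flatMap (fun b => [b, !b]) from rfl] at h1 h2
    rw [hf1] at h1
    rw [hf2, h1] at h2
    simp at h2

lemma tm_odd (n p : ℕ) (b : Bool) (h1 : (tm n)[p]? = some b)
    (h2 : (tm n)[p+1]? = some b) : p % 2 = 1 := by
  by_contra h
  obtain ⟨k, rfl⟩ : ∃ k, p = 2*k := ⟨p/2, by omega⟩
  exact tm_pair n k b h1 h2

lemma tm_ccc (n p : ℕ) (b : Bool) (h1 : (tm n)[p]? = some b)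
    (h2 : (tm n)[p+1]? = some b) (h3 : (tm n)[p+2]? = some b) : False := by
  have o1 := tm_odd n p b h1 h2
  have o2 := tm_odd n (p+1) b h2 (by rw [show p+1+1 = p+2 from rfl]; exact h3)
  omega

lemma occ_get {n : ℕ} {u : List Bool} {i : ℕ} (h : occursAt (tm n) u i)
    (k : ℕ) (hk : k < u.length) : (tm n)[i-1+k]? = u[k]? := by
  obtain ⟨hi, hlen, heq⟩ := h
  conv_rhs => rw [← heq]
  rw [List.getElem?_take_of_lt hk, List.getElem?_drop]

lemma tm_alt_odd (n : ℕ) (a : Bool) (s : ℕ)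
    (g0 : (tm n)[s]? = some a) (g1 : (tm n)[s+1]? = some (!a))
    (g2 : (tm n)[s+2]? = some a) (g3 : (tm n)[s+3]? = some (!a)) :
    s % 2 = 0 := by
  by_contra h
  obtain ⟨m, rfl⟩ : ∃ m, s = 2*m+1 := ⟨s/2, by omega⟩
  cases n with
  | zero =>
    obtain ⟨h', -⟩ := List.getElem?_eq_some_iff.mp g3
    simp [tm] at h'
  | succ n =>
    rw [show tm (n+1) = (tm n).flatMap (fun b => [b, !b]) from rfl] at g0 g1 g3
    rw [(fm_get (tm n) m).2] at g0
    rw [show 2*m+1+1 = 2*(m+1) from by ring, (fm_get (tm n) (m+1)).1] at g1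
    rw [show 2*m+1+3 = 2*(m+2) from by ring, (fm_get (tm n) (m+2)).1] at g3
    obtain ⟨b', hb', hba⟩ := Option.map_eq_some_iff.mp g0
    have hb : b' = !a := by cases b' <;> cases a <;> simp_all
    rw [hb] at hb'
    exact tm_ccc n m (!a) hb' g1 g3

end TMAux

theorem stmt5 (n : ℕ) (u : List Bool) (i j : ℕ)
    (hne : u ≠ [])
    (hexc : u ∉ ([[false, true, false], [true, false, true], [false, true],
      [true, false], [false], [true]] : List (List Bool)))
    (hi : occursAt (tm n) u i) (hj : occursAt (tm n) u j) :
    i % 2 = j % 2 := by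

  by_cases hcc : ∃ k b, k + 1 < u.length ∧ u[k]? = some b ∧ u[k+1]? = some b
  · obtain ⟨k, b, hk, h1, h2⟩ := hcc
    have gi1 := occ_get hi k (by omega); rw [h1] at gi1
    have gi2 := occ_get hi (k+1) hk; rw [h2] at gi2
    have gj1 := occ_get hj k (by omega); rw [h1] at gj1
    have gj2 := occ_get hj (k+1) hk; rw [h2] at gj2
    have oi := tm_odd n (i-1+k) b gi1 gi2
    have oj := tm_odd n (j-1+k) b gj1 gj2
    have := hi.1; have := hj.1
    omega
  · push_neg at hcc
    match u, hne, hexc, hcc, hi, hj with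
    | [a], _, hexc, _, _, _ => cases a <;> simp at hexc
    | [a,b], _, hexc, hcc, _, _ =>
      have hba : ¬ b = a := by simpa using hcc 0 a (by simp) (by simp)
      cases a <;> cases b <;> first | exact absurd rfl hba | simp at hexc
    | [a,b,c], _, hexc, hcc, _, _ =>
      have e1 : ¬ b = a := by simpa using hcc 0 a (by simp) (by simp)
      have e2 : ¬ c = b := by simpa using hcc 1 b (by simp) (by simp)
      cases a <;> cases b <;> cases c <;>
        first | exact absurd rfl e1 | exact absurd rfl e2 | simp at hexc
    | a::b::c::d::rest, _, _, hcc, hi, hj =>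
      have e1 : ¬ b = a := by simpa using hcc 0 a (by simp) (by simp)
      have e2 : ¬ c = b := by simpa using hcc 1 b (by simp) (by simp)
      have e3 : ¬ d = c := by simpa using hcc 2 c (by simp) (by simp)
      have hb : b = !a := by revert e1; cases a <;> cases b <;> decide
      have hc : c = a := by revert e1 e2; cases a <;> cases b <;> cases c <;> decide
      have hd : d = !a := by
        revert e1 e2 e3; cases a <;> cases b <;> cases c <;> cases d <;> decide
      have key : ∀ m, occursAt (tm n) (a::b::c::d::rest) m → (m-1) % 2 = 0 := by
        intro m hm
        have g0 := occ_get hm 0 (by simp)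
        have g1 := occ_get hm 1 (by simp)
        have g2 := occ_get hm 2 (by simp)
        have g3 := occ_get hm 3 (by simp)
        rw [show (a::b::c::d::rest)[0]? = some a from rfl, Nat.add_zero] at g0
        rw [show (a::b::c::d::rest)[1]? = some b from rfl, hb] at g1
        rw [show (a::b::c::d::rest)[2]? = some c from rfl, hc] at g2
        rw [show (a::b::c::d::rest)[3]? = some d from rfl, hd] at g3
        exact tm_alt_odd n a (m-1) g0 g1 g2 g3
      have oi := key i hi
      have oj := key j hj
      have := hi.1
      have := hj.1
      omega
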